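/- The sequence t ↦ (t^t · t! / (2t)!) · (4/e)^t of real numbers converges to 1/√2 as t → ∞, where e = exp 1. -/

import Mathlib

open Filter Real Stirling

lemma weak_oracle_aux (t : ℕ) (ht : 1 ≤ t) :
    (t : ℝ) ^ t * (t.factorial : ℝ) / ((2 * t).factorial : ℝ)
          * (4 / Real.exp 1) ^ t
      = stirlingSeq t / stirlingSeq (2 * t) * (1 / Real.sqrt 2) := by
  have htp : (0:ℝ) < t := by exact_mod_cast ht
  have he : (0:ℝ) < Real.exp 1 := Real.exp_pos 1
  have hs : Real.sqrt (2 * ((2 * t : ℕ) : ℝ)) = Real.sqrt 2 * Real.sqrt (2 * (t : ℝ)) := by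
    push_cast
    rw [show (2:ℝ) * (2 * t) = 2 * (2 * (t:ℝ)) by ring,
      Real.sqrt_mul (by norm_num : (0:ℝ) ≤ 2)]
  rw [stirlingSeq, stirlingSeq, hs]
  push_cast
  have h1 : (0:ℝ) < ((2*t).factorial : ℝ) := by exact_mod_cast Nat.factorial_pos _
  have h2 : (0:ℝ) < (t.factorial : ℝ) := by exact_mod_cast Nat.factorial_pos _
  have h3 : (0:ℝ) < Real.sqrt (2 * t) := Real.sqrt_pos.2 (by positivity)
  have h4 : (0:ℝ) < ((t:ℝ) / Real.exp 1) ^ t := by positivity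
  have h5 : (0:ℝ) < ((2*(t:ℝ)) / Real.exp 1) ^ (2*t) := by positivity
  have h6 : (0:ℝ) < Real.sqrt 2 := by positivity
  field_simp
  have e1 : Real.exp (2 * (t:ℝ)) = Real.exp t * Real.exp t := by
    rw [two_mul, Real.exp_add]
  have e2 : ((2:ℝ) * t) ^ (2 * t) = 4 ^ t * (t:ℝ) ^ t * (t:ℝ) ^ t := by
    rw [mul_pow, pow_mul, pow_mul]
    norm_num
    ring
  rw [pow_mul, ← mul_pow, ← mul_pow]
  congr 1
  ring

theorem weak_oracle_success_asymptotics :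
    Filter.Tendsto
      (fun t : ℕ =>
        (t : ℝ) ^ t * (t.factorial : ℝ) / ((2 * t).factorial : ℝ)
          * (4 / Real.exp 1) ^ t)
      Filter.atTop (nhds (1 / Real.sqrt 2)) := by
  have hπ : Real.sqrt π ≠ 0 := by positivity
  have h2t : Filter.Tendsto (fun t : ℕ => 2 * t) atTop atTop :=
    Filter.tendsto_atTop_atTop_of_monotone (fun a b h => by omega) (fun b => ⟨b, by omega⟩)
  have h : Filter.Tendsto (fun t : ℕ => stirlingSeq t / stirlingSeq (2 * t) * (1 / Real.sqrt 2))
      atTop (nhds (1 / Real.sqrt 2)) := by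
    have := (tendsto_stirlingSeq_sqrt_pi.div (tendsto_stirlingSeq_sqrt_pi.comp h2t) hπ).mul_const
      (1 / Real.sqrt 2)
    simpa [div_self hπ] using this
  refine h.congr' ?_
  filter_upwards [Filter.eventually_ge_atTop 1] with t ht
  exact (weak_oracle_aux t ht).symm
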